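/- arXiv:2202.00313 — 2 statements merged into one kernel-verified Lean document; each statement's English description precedes it below -/
import Mathlib

section
/- Let q₁,…,q_d ∈ ℚ^d be vectors that are linearly independent over ℝ, and let 0 < a_i < b_i for every i = 1,…,d. Then the set {ν ∈ ℤ^d : ⟨ν, λq_i⟩ ∉ ℤ for every λ ∈ (a_i,b_i)∩ℚ and every i ∈ {1,…,d}} is finite. -/
open Function Set Filter Topology MeasureTheory

noncomputable section

/-- `ℝ^d` with the Euclidean structure. -/
abbrev Ed (d : ℕ) := EuclideanSpace ℝ (Fin d)
/-- `ℂ^d`. -/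
abbrev Cd (d : ℕ) := EuclideanSpace ℂ (Fin d)

variable {d : ℕ}

/-- The real vector associated with an integer vector `m ∈ ℤ^d`. -/
def intVec (d : ℕ) (m : Fin d → ℤ) : Ed d := WithLp.toLp 2 (fun i => (m i : ℝ))

/-- The complex vector associated with an integer vector `m ∈ ℤ^d`. -/
def intVecC (d : ℕ) (m : Fin d → ℤ) : Cd d := WithLp.toLp 2 (fun i => (m i : ℂ))

/-- The canonical embedding `ℝ^d → ℂ^d`. -/
def complexify (q : Ed d) : Cd d := WithLp.toLp 2 (fun i => (q i : ℂ))

/-- The standard pairing `⟨p, v⟩ = ∑ i, p i * v i` on `ℝ^d`. -/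
def pairing (p v : Ed d) : ℝ := ∑ i, p i * v i

/-- The standard bilinear pairing on `ℂ^d`. -/
def pairingC (p v : Cd d) : ℂ := ∑ i, p i * v i

/-- `g` is a `C¹` diffeomorphism. -/
def IsC1Diffeo {X Y : Type*} [NormedAddCommGroup X] [NormedSpace ℝ X]
    [NormedAddCommGroup Y] [NormedSpace ℝ Y] (g : X → Y) : Prop :=
  ContDiff ℝ 1 g ∧ ∃ ginv : Y → X, ContDiff ℝ 1 ginv ∧
    Function.LeftInverse ginv g ∧ Function.RightInverse ginv g

/-- `g` is a holomorphic diffeomorphism. -/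
def IsHolDiffeo {X Y : Type*} [NormedAddCommGroup X] [NormedSpace ℂ X]
    [NormedAddCommGroup Y] [NormedSpace ℂ Y] (g : X → Y) : Prop :=
  Differentiable ℂ g ∧ ∃ ginv : Y → X, Differentiable ℂ ginv ∧
    Function.LeftInverse ginv g ∧ Function.RightInverse ginv g

/-- `F(q+m, p) = F(q, p) + (m, 0)` for all `m ∈ ℤ^d`: `F` is the lift of a map of
`𝕋^d × ℝ^d`. -/
def IsZdLift (F : Ed d × Ed d → Ed d × Ed d) : Prop :=
  ∀ (m : Fin d → ℤ) (q p : Ed d),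
    F (q + intVec d m, p) = ((F (q, p)).1 + intVec d m, (F (q, p)).2)

/-- `S` is a generating function for the lift `F`, i.e. `S(q+m, Q+m) = S(q, Q)` and
`P dQ - p dq = dS(q, Q)`; the latter means `∂₁S(q, Q(q,p)) = -p` and
`∂₂S(q, Q(q,p)) = P(q,p)`. -/
structure IsGenFun (F : Ed d × Ed d → Ed d × Ed d) (S : Ed d × Ed d → ℝ) : Prop where
  periodic : ∀ (m : Fin d → ℤ) (q Q : Ed d), S (q + intVec d m, Q + intVec d m) = S (q, Q)
  dq : ∀ q p v : Ed d, fderiv ℝ (fun q' => S (q', (F (q, p)).1)) q v = -(pairing p v)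
  dQ : ∀ q p v : Ed d, fderiv ℝ (fun Q' => S (q, Q')) (F (q, p)).1 v = pairing (F (q, p)).2 v

/-- `F : ℝ^d × ℝ^d → ℝ^d × ℝ^d` is a lift of a symplectic twist map of `𝕋^d × ℝ^d`
with generating function `S`. -/
structure IsSymplecticTwistLift (F : Ed d × Ed d → Ed d × Ed d)
    (S : Ed d × Ed d → ℝ) : Prop where
  diffeo : IsC1Diffeo F
  lift : IsZdLift F
  twist : IsC1Diffeo (fun x : Ed d × Ed d => (x.1, (F x).1))
  genfun : IsGenFun F S

/-- The mixed second derivative `∂²_{qQ} S (q,Q) (v, v)`. -/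
def mixedS (S : Ed d × Ed d → ℝ) (q Q v : Ed d) : ℝ :=
  fderiv ℝ (fun Q' => fderiv ℝ (fun q' => S (q', Q')) q v) Q v

/-- The symplectic twist map with `C²` generating function `S` is positive. -/
def PositiveGenFun (S : Ed d × Ed d → ℝ) : Prop :=
  ContDiff ℝ 2 S ∧ ∃ α : ℝ, 0 < α ∧ ∀ q Q v : Ed d, mixedS S q Q v ≤ -α * ‖v‖ ^ 2

/-- The symplectic twist map with `C²` generating function `S` is strongly positive. -/
def StronglyPositiveGenFun (S : Ed d × Ed d → ℝ) : Prop :=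
  ContDiff ℝ 2 S ∧ ∃ α β : ℝ, 0 < α ∧ 0 < β ∧
    ∀ q Q v : Ed d, -β * ‖v‖ ^ 2 ≤ mixedS S q Q v ∧ mixedS S q Q v ≤ -α * ‖v‖ ^ 2

/-- The second derivative `∂²_{qq} S (q, Q)` as a continuous bilinear map. -/
def hessqq (S : Ed d × Ed d → ℝ) (q Q : Ed d) : Ed d →L[ℝ] Ed d →L[ℝ] ℝ :=
  fderiv ℝ (fun q' => fderiv ℝ (fun q'' => S (q'', Q)) q') q

/-- The second derivative `∂²_{QQ} S (q, Q)` as a continuous bilinear map. -/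
def hessQQ (S : Ed d × Ed d → ℝ) (q Q : Ed d) : Ed d →L[ℝ] Ed d →L[ℝ] ℝ :=
  fderiv ℝ (fun Q' => fderiv ℝ (fun Q'' => S (q, Q'')) Q') Q

/-- The symplectic twist map with `C²` generating function `S` has bounded rate:
`‖∂²_{qq} S‖_∞ + ‖∂²_{QQ} S‖_∞ < ∞`. -/
def BoundedRateGenFun (S : Ed d × Ed d → ℝ) : Prop :=
  ContDiff ℝ 2 S ∧ ∃ C : ℝ, ∀ q Q : Ed d, ‖hessqq S q Q‖ + ‖hessQQ S q Q‖ ≤ C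

/-- `γ : ℝ^d → ℝ^d` is `ℤ^d`-periodic. -/
def ZdPeriodic (γ : Ed d → Ed d) : Prop :=
  ∀ (m : Fin d → ℤ) (q : Ed d), γ (q + intVec d m) = γ q

/-- A function `G : ℝ^d → ℝ` is `ℤ^d`-periodic, i.e. is a function on `𝕋^d`. -/
def ZdPeriodicFun (G : Ed d → ℝ) : Prop :=
  ∀ (m : Fin d → ℤ) (q : Ed d), G (q + intVec d m) = G q

/-- The graph of `γ` is Lagrangian: `∫₀¹ γ(ν(t))·ν'(t) dt = 0` for every `C¹` loop `ν`. -/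
def IsLagrangianGraph (γ : Ed d → Ed d) : Prop :=
  ∀ ν : ℝ → Ed d, ContDiff ℝ 1 ν → (∀ t : ℝ, ν (t + 1) = ν t) →
    ∫ t in (0:ℝ)..1, pairing (γ (ν t)) (deriv ν t) = 0

/-- The graph of `γ` is an `(m, n)`-periodic graph of `F`: `F^n(q, γ(q)) = (q+m, γ(q))`. -/
def IsPeriodicGraph (F : Ed d × Ed d → Ed d × Ed d) (m : Fin d → ℤ) (n : ℕ)
    (γ : Ed d → Ed d) : Prop :=
  ∀ q : Ed d, F^[n] (q, γ q) = (q + intVec d m, γ q)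

/-- `m ∈ ℤ^d` and `n ∈ ℕ` are coprime. -/
def CoprimeVec (m : Fin d → ℤ) (n : ℕ) : Prop :=
  Nat.gcd (Finset.univ.gcd fun i => (m i).natAbs) n = 1

/-- The graph of `γ`, as a subset of `ℝ^d × ℝ^d`. -/
def graphSet (γ : Ed d → Ed d) : Set (Ed d × Ed d) := {x : Ed d × Ed d | x.2 = γ x.1}

/-- `F` admits a Lipschitz Lagrangian `(m,n)`-periodic graph. -/
def HasLipLagPeriodicGraph (F : Ed d × Ed d → Ed d × Ed d) (m : Fin d → ℤ) (n : ℕ) : Prop :=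
  ∃ γ : Ed d → Ed d, (∃ K : NNReal, LipschitzWith K γ) ∧ ZdPeriodic γ ∧
    IsLagrangianGraph γ ∧ IsPeriodicGraph F m n γ

/-- The symplectic twist map lifted by `F` satisfies the analyticity property: there is a
holomorphic diffeomorphism of `ℂ^d × ℂ^d` extending `F`, satisfying the twist condition
and admitting a holomorphic generating function. -/
def SatisfiesAnalyticityProperty (F : Ed d × Ed d → Ed d × Ed d) : Prop :=
  ∃ Fc : Cd d × Cd d → Cd d × Cd d,
    IsHolDiffeo Fc ∧
    (∀ q p : Ed d, Fc (complexify q, complexify p)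
        = (complexify (F (q, p)).1, complexify (F (q, p)).2)) ∧
    IsHolDiffeo (fun x : Cd d × Cd d => (x.1, (Fc x).1)) ∧
    ∃ Sc : Cd d × Cd d → ℂ, Differentiable ℂ Sc ∧
      (∀ (m : Fin d → ℤ) (q Q : Cd d), Sc (q + intVecC d m, Q + intVecC d m) = Sc (q, Q)) ∧
      (∀ q p v : Cd d, fderiv ℂ (fun q' => Sc (q', (Fc (q, p)).1)) q v = -(pairingC p v)) ∧
      (∀ q p v : Cd d,
        fderiv ℂ (fun Q' => Sc (q, Q')) (Fc (q, p)).1 v = pairingC (Fc (q, p)).2 v)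

/-- `G : 𝕋^d → ℝ` admits a holomorphic extension to `ℂ^d`. -/
def HasHolomorphicExtension (G : Ed d → ℝ) : Prop :=
  ∃ Gc : Cd d → ℂ, Differentiable ℂ Gc ∧ ∀ q : Ed d, Gc (complexify q) = (G q : ℂ)

/-- `F` is the lift of a completely integrable map `f(q,p) = (q + ∇ℓ₀(p), p)` where
`ℓ₀` is `C²` and `∇ℓ₀` is a `C¹` diffeomorphism of `ℝ^d`. -/
def CompletelyIntegrableLift (F : Ed d × Ed d → Ed d × Ed d) : Prop :=
  ∃ (ℓ : Ed d → ℝ) (g : Ed d → Ed d), ContDiff ℝ 2 ℓ ∧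
    (∀ p v : Ed d, fderiv ℝ ℓ p v = pairing (g p) v) ∧
    IsC1Diffeo g ∧ ∀ q p : Ed d, F (q, p) = (q + g p, p)

/-- The `ν`-th Fourier coefficient of a `ℤ^d`-periodic function `G : ℝ^d → ℝ`. -/
def fourierCoeffT (G : Ed d → ℝ) (ν : Fin d → ℤ) : ℂ :=
  ∫ q in {q : Ed d | ∀ i, q i ∈ Set.Icc (0:ℝ) 1},
    (G q : ℂ) * Complex.exp (-(2 * Real.pi * Complex.I) * ∑ i, (ν i : ℂ) * (q i : ℂ))

/-- The sequence `(x_j)_{j ∈ ℤ}` is action-minimizing for the generating function `S`. -/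
def IsMinimizingSeq (S : Ed d × Ed d → ℝ) (x : ℤ → Ed d) : Prop :=
  ∀ (k : ℤ) (N : ℕ) (w : ℕ → Ed d), w 0 = x k → w N = x (k + N) →
    ∑ j ∈ Finset.range N, S (x (k + j), x (k + j + 1)) ≤
      ∑ j ∈ Finset.range N, S (w j, w (j + 1))

/-- `x : ℤ → ℝ^d × ℝ^d` is a full orbit of `F`. -/
def IsFullOrbit (F : Ed d × Ed d → Ed d × Ed d) (x : ℤ → Ed d × Ed d) : Prop :=
  ∀ j : ℤ, x (j + 1) = F (x j)

/-- The orbit of `a` under `F` is action-minimizing (its projection is a minimizing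
sequence). -/
def OrbitMinimizing (F : Ed d × Ed d → Ed d × Ed d) (S : Ed d × Ed d → ℝ)
    (a : Ed d × Ed d) : Prop :=
  ∃ x : ℤ → Ed d × Ed d, x 0 = a ∧ IsFullOrbit F x ∧ IsMinimizingSeq S fun j => (x j).1

/-- The superlinearity condition `S(q,Q)/‖Q-q‖ → ∞` as `‖Q-q‖ → ∞`. -/
def SuperlinearGenFun (S : Ed d × Ed d → ℝ) : Prop :=
  ∀ A : ℝ, ∃ R : ℝ, ∀ q Q : Ed d, R ≤ ‖Q - q‖ → A * ‖Q - q‖ ≤ S (q, Q)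

/-- The determinant of `∂_p (π₁ ∘ F^n) (q, p)`. -/
def twistDet (F : Ed d × Ed d → Ed d × Ed d) (n : ℕ) (q p : Ed d) : ℝ :=
  LinearMap.det ((fderiv ℝ (fun p' => (F^[n] (q, p')).1) p : Ed d →L[ℝ] Ed d)
    : Ed d →ₗ[ℝ] Ed d)

/-- The set `A ⊆ ℝ` is infinite with points accumulating to `0`. -/
def InfiniteAccumulatingAtZero (A : Set ℝ) : Prop :=
  A.Infinite ∧ ∀ δ : ℝ, 0 < δ → ∃ ε ∈ A, ε ≠ 0 ∧ |ε| < δ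


/-- Lemma 3.2 of the paper, arithmetic lemma. Let `q₁, …, q_d ∈ ℚ^d`
be linearly independent over `ℝ`, and `0 < a_i < b_i` for each `i`. Then the set of
`ν ∈ ℤ^d` such that `⟨ν, λ q_i⟩ ∉ ℤ` for every rational `λ ∈ (a_i, b_i)` and every `i`
is finite. -/
theorem statement10 (d : ℕ) (qv : Fin d → Fin d → ℚ)
    (hqv : LinearIndependent ℝ fun i => fun j => (qv i j : ℝ))
    (a b : Fin d → ℝ) (hab : ∀ i, 0 < a i ∧ a i < b i) :
    {ν : Fin d → ℤ | ∀ (i : Fin d) (l : ℚ), a i < (l : ℝ) → (l : ℝ) < b i →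
      ¬ ∃ k : ℤ, ∑ j, (ν j : ℚ) * (l * qv i j) = (k : ℚ)}.Finite := by
  classical
  set Q : Matrix (Fin d) (Fin d) ℚ := Matrix.of qv with hQ
  -- Q is invertible
  have hA : IsUnit (Q.map (Rat.cast (K := ℝ))) := by
    rw [← Matrix.linearIndependent_rows_iff_isUnit]
    exact hqv
  have hdet : IsUnit Q.det := by
    have hdetR : IsUnit ((Q.map (Rat.cast (K := ℝ))).det) := (Matrix.isUnit_iff_isUnit_det _).mp hA
    have h2 : ((Q.det : ℚ) : ℝ) ≠ 0 := by
      have hmd := RingHom.map_det (Rat.castHom ℝ) Q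
      simp only [Rat.coe_castHom] at hmd
      rw [hmd]
      exact hdetR.ne_zero
    exact isUnit_iff_ne_zero.mpr (by exact_mod_cast h2)
  -- bound on each coordinate
  set B : Fin d → ℝ := fun i => 1 / (b i - a i) with hB
  have hBpos : ∀ i, 0 < B i := fun i => by
    have := (hab i).2
    simp only [hB]
    exact div_pos one_pos (by linarith)
  set M : ℝ := ∑ j : Fin d, ∑ i : Fin d, |((Q⁻¹ j i : ℚ) : ℝ)| * B i with hM
  have key : ∀ ν ∈ {ν : Fin d → ℤ | ∀ (i : Fin d) (l : ℚ), a i < (l : ℝ) → (l : ℝ) < b i →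
      ¬ ∃ k : ℤ, ∑ j, (ν j : ℚ) * (l * qv i j) = (k : ℚ)}, ∀ j, |((ν j : ℝ))| ≤ M := by
    intro ν hν j
    set r : Fin d → ℚ := fun i => ∑ j, (ν j : ℚ) * qv i j with hr
    have hsum : ∀ (i : Fin d) (l : ℚ), ∑ j, (ν j : ℚ) * (l * qv i j) = l * r i := by
      intro i l
      rw [hr, Finset.mul_sum]
      exact Finset.sum_congr rfl fun x _ => by ring
    -- each |r i| ≤ B i
    have hri : ∀ i, |((r i : ℚ) : ℝ)| ≤ B i := by
      intro i
      by_contra hcon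
      push_neg at hcon
      have hbapos : 0 < b i - a i := by linarith [(hab i).2]
      set s : ℚ := |r i| with hs
      have hsR : ((s : ℚ) : ℝ) = |((r i : ℚ) : ℝ)| := by rw [hs]; exact Rat.cast_abs _
      have hspos : (0:ℝ) < (s:ℝ) := by rw [hsR]; exact lt_of_le_of_lt (le_of_lt (hBpos i)) hcon
      have h1 : 1 < (s:ℝ) * (b i - a i) := by
        rw [hsR]
        calc 1 = B i * (b i - a i) := by rw [hB]; exact (one_div_mul_cancel hbapos.ne').symm
        _ < _ := by apply mul_lt_mul_of_pos_right hcon hbapos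
      -- find integer k in (a i * s, b i * s)
      set k : ℤ := ⌊a i * (s:ℝ)⌋ + 1 with hk
      have hk1 : a i * (s:ℝ) < (k:ℝ) := by push_cast [hk]; linarith [Int.lt_floor_add_one (a i * (s:ℝ))]
      have hk2 : (k:ℝ) < b i * (s:ℝ) := by
        push_cast [hk]
        have := Int.floor_le (a i * (s:ℝ))
        nlinarith
      set l : ℚ := (k : ℚ) / s with hl
      have hla : a i < (l:ℝ) := by
        rw [hl]; push_cast
        rw [lt_div_iff₀ hspos]; exact hk1
      have hlb : (l:ℝ) < b i := by
        rw [hl]; push_cast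
        rw [div_lt_iff₀ hspos]; exact hk2
      have hrne : r i ≠ 0 := by
        intro h0
        rw [hsR] at hspos
        simp [h0] at hspos
      apply hν i l hla hlb
      rcases abs_cases (r i) with ⟨he, _⟩ | ⟨he, _⟩
      · exact ⟨k, by rw [hsum, hl, hs, he]; field_simp⟩
      · exact ⟨-k, by
          rw [hsum, hl, hs, he, div_neg, neg_mul, div_mul_cancel₀ _ hrne]
          push_cast; ring⟩
    -- invert the matrix
    have hνeq : (fun j => ((ν j : ℚ))) = Q⁻¹.mulVec r := by
      have hQr : Q.mulVec (fun j => ((ν j : ℚ))) = r := by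
        funext i
        simp only [Matrix.mulVec, dotProduct, hr, hQ, Matrix.of_apply]
        exact Finset.sum_congr rfl fun x _ => mul_comm _ _
      rw [← hQr, Matrix.mulVec_mulVec, Q.nonsing_inv_mul hdet, Matrix.one_mulVec]
    have hνj : ((ν j : ℚ)) = ∑ i, Q⁻¹ j i * r i := by
      have := congrFun hνeq j
      simpa [Matrix.mulVec, dotProduct] using this
    calc |((ν j : ℝ))| = |∑ i, ((Q⁻¹ j i : ℚ):ℝ) * ((r i : ℚ):ℝ)| := by
          rw [show ((ν j : ℝ)) = (((ν j : ℚ) : ℝ)) by push_cast; ring, hνj]; push_cast; ring_nf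
      _ ≤ ∑ i, |((Q⁻¹ j i : ℚ):ℝ) * ((r i : ℚ):ℝ)| := Finset.abs_sum_le_sum_abs _ _
      _ ≤ ∑ i, |((Q⁻¹ j i : ℚ):ℝ)| * B i := by
          apply Finset.sum_le_sum
          intro i _
          rw [abs_mul]
          exact mul_le_mul_of_nonneg_left (hri i) (abs_nonneg _)
      _ ≤ M := by
          rw [hM]
          apply Finset.single_le_sum (f := fun j => ∑ i, |((Q⁻¹ j i : ℚ):ℝ)| * B i)
            (fun j _ => Finset.sum_nonneg fun i _ => mul_nonneg (abs_nonneg _) (le_of_lt (hBpos i)))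
            (Finset.mem_univ j)
  -- finiteness from the bound
  apply Set.Finite.subset (Set.Finite.pi (fun j : Fin d => Set.finite_Icc (-⌈M⌉) ⌈M⌉))
  intro ν hν
  intro j _
  have h := key ν hν j
  rw [abs_le] at h
  constructor
  · have : (-⌈M⌉ : ℝ) ≤ (ν j : ℝ) := le_trans (by simpa using neg_le_neg (Int.le_ceil M)) h.1
    exact_mod_cast this
  · have : ((ν j : ℝ)) ≤ (⌈M⌉ : ℝ) := le_trans h.2 (Int.le_ceil M)
    exact_mod_cast this


end
end

section
/- Let f be a symplectic twist map of 𝕋^d×ℝ^d with lift F and generating function S, assume f is completely integrable, strongly positive, and satisfies the analyticity property. Let G ∈ C²(𝕋^d) and for ε ∈ ℝ let f_ε be the symplectic twist map with generating function S_ε(q,Q) := S(q,Q) + εG(q), with (F_ε)_{ε∈ℝ} a continuous family of lifts of f_ε. Assume that there exist a basis q₁,…,q_d of ℚ^d and open intervals I₁,…,I_d ⊂ ℝ such that for every rational vector m/n ∈ ⋃_{j=1}^d I_j q_j ∩ ℚ^d (with m ∈ ℤ^d, n ∈ ℕ*, m and n coprime), F_ε has a Lipschitz Lagrangian (m,n)-periodic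 graph for infinitely many values of ε ∈ ℝ accumulating to 0. Then G is a trigonometric polynomial, i.e. only finitely many Fourier coefficients Ĝ(ν), ν ∈ ℤ^d, are nonzero. -/
open Function Set Filter Topology MeasureTheory

noncomputable section

variable {d : ℕ}

section Aux
variable {d : ℕ}

/-- The unit cube in `ℝ^d`. -/
def cube (d : ℕ) : Set (Ed d) := {q : Ed d | ∀ i, q i ∈ Set.Icc (0:ℝ) 1}

@[simp] lemma intVec_apply (m : Fin d → ℤ) (i : Fin d) : intVec d m i = (m i : ℝ) := rfl

lemma measurable_coord (i : Fin d) : Measurable fun q : Ed d => q i :=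
  ((continuous_apply i).comp (PiLp.continuous_ofLp 2 fun _ : Fin d => ℝ)).measurable

lemma measurableSet_cube : MeasurableSet (cube d) := by
  have : cube d = ⋂ i, (fun q : Ed d => q i) ⁻¹' (Set.Icc (0:ℝ) 1) := by
    ext q; simp [cube, Set.mem_iInter]
  rw [this]
  exact MeasurableSet.iInter fun i => (measurable_coord i) measurableSet_Icc

lemma volume_hyperplane (i : Fin d) (c : ℝ) :
    MeasureTheory.volume {q : Ed d | q i = c} = 0 := by
  have hmp := EuclideanSpace.volume_preserving_symm_measurableEquiv_toLp (Fin d)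
  have heq : {q : Ed d | q i = c}
      = (MeasurableEquiv.toLp 2 (Fin d → ℝ)).symm ⁻¹' {f : Fin d → ℝ | f i = c} := rfl
  have hs : MeasurableSet {f : Fin d → ℝ | f i = c} :=
    measurableSet_eq_fun (measurable_pi_apply i) measurable_const
  rw [heq, hmp.measure_preimage hs.nullMeasurableSet]
  rw [MeasureTheory.volume_pi]
  exact MeasureTheory.Measure.pi_hyperplane
    (fun _ : Fin d => (MeasureTheory.volume : MeasureTheory.Measure ℝ)) i c

/-- The standard basis of `ℝ^d` as a `Basis`. -/
noncomputable def stdBasis (d : ℕ) : Module.Basis (Fin d) ℝ (Ed d) := PiLp.basisFun 2 ℝ (Fin d)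

lemma stdBasis_fd : ZSpan.fundamentalDomain (stdBasis d)
    = {q : Ed d | ∀ i, q i ∈ Set.Ico (0:ℝ) 1} := by
  ext q
  simp [ZSpan.fundamentalDomain, stdBasis, PiLp.basisFun_repr]

lemma cube_ae_fd : cube d =ᵐ[MeasureTheory.volume] ZSpan.fundamentalDomain (stdBasis d) := by
  rw [Filter.eventuallyEq_set]
  have hnull : MeasureTheory.volume (⋃ i, {q : Ed d | q i = 1}) = 0 :=
    MeasureTheory.measure_iUnion_null fun i => volume_hyperplane i 1
  filter_upwards [MeasureTheory.measure_eq_zero_iff_ae_notMem.mp hnull] with q hq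
  simp only [Set.mem_iUnion, Set.mem_setOf_eq, not_exists] at hq
  rw [stdBasis_fd]
  constructor
  · intro h i
    rcases h i with ⟨h0, h1⟩
    exact ⟨h0, lt_of_le_of_ne h1 (hq i)⟩
  · intro h i
    rcases h i with ⟨h0, h1⟩
    exact ⟨h0, le_of_lt h1⟩

lemma latt_intVec {x : Ed d} (hx : x ∈ Submodule.span ℤ (Set.range (stdBasis d))) :
    ∃ m : Fin d → ℤ, x = intVec d m := by
  refine Submodule.span_induction ?_ ?_ ?_ ?_ hx
  · rintro y ⟨i, rfl⟩
    refine ⟨fun j => if j = i then 1 else 0, ?_⟩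
    ext j
    simp only [stdBasis, PiLp.basisFun_apply, intVec]
    by_cases h : j = i <;> simp [h, Pi.single_apply]
  · exact ⟨0, by ext j; simp [intVec]⟩
  · rintro y z - - ⟨my, rfl⟩ ⟨mz, rfl⟩
    exact ⟨my + mz, by ext j; simp⟩
  · rintro c y - ⟨my, rfl⟩
    refine ⟨c • my, ?_⟩
    ext j
    simp [zsmul_eq_mul]

/-- Integral over the unit cube of a `ℤ^d`-periodic function is translation invariant. -/
lemma cube_integral_translate (ψ : Ed d → ℂ)
    (hper : ∀ (m : Fin d → ℤ) (q : Ed d), ψ (q + intVec d m) = ψ q) (a : Ed d) :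
    ∫ q in cube d, ψ (q + a) = ∫ q in cube d, ψ q := by
  classical
  set L := Submodule.span ℤ (Set.range (stdBasis d)) with hL
  haveI : MeasurableVAdd ↥L (Ed d) := by
    constructor
    · intro c
      exact (measurable_subtype_coe.add_const c)
  haveI : MeasureTheory.VAddInvariantMeasure ↥L (Ed d) MeasureTheory.volume := by
    constructor
    intro c s hs
    exact MeasureTheory.measure_preimage_add MeasureTheory.volume (c : Ed d) s
  have hFD := ZSpan.isAddFundamentalDomain (stdBasis d)
      (MeasureTheory.volume : MeasureTheory.Measure (Ed d))
  have hinv : ∀ (g : ↥L) (x : Ed d), ψ (g +ᵥ x) = ψ x := by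
    rintro ⟨g, hg⟩ x
    rcases latt_intVec hg with ⟨m, rfl⟩
    show ψ (intVec d m + x) = ψ x
    rw [add_comm]; exact hper m x
  have hmp : MeasureTheory.MeasurePreserving (fun x : Ed d => x + a)
      MeasureTheory.volume MeasureTheory.volume :=
    MeasureTheory.measurePreserving_add_right MeasureTheory.volume a
  have hemb : MeasurableEmbedding (fun x : Ed d => x + a) :=
    (MeasurableEquiv.addRight a).measurableEmbedding
  have hFD' : MeasureTheory.IsAddFundamentalDomain ↥L
      ((Equiv.addRight a) '' (ZSpan.fundamentalDomain (stdBasis d))) MeasureTheory.volume := by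
    refine hFD.image_of_equiv (Equiv.addRight a) ?_ (Equiv.refl _) ?_
    · have h1 : ⇑(Equiv.addRight a).symm = fun x : Ed d => x + (-a) := by
        funext x; simp [Equiv.addRight, sub_eq_add_neg]
      have h2 : MeasureTheory.MeasurePreserving (⇑(Equiv.addRight a).symm)
          MeasureTheory.volume (MeasureTheory.volume : MeasureTheory.Measure (Ed d)) := by
        rw [h1]; exact MeasureTheory.measurePreserving_add_right MeasureTheory.volume (-a)
      exact h2.quasiMeasurePreserving
    · intro g x
      show (g +ᵥ x) + a = g +ᵥ (x + a)
      show ((g : Ed d) + x) + a = (g : Ed d) + (x + a)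
      rw [add_assoc]
  have key : ∫ q in (Equiv.addRight a) '' (ZSpan.fundamentalDomain (stdBasis d)), ψ q
      = ∫ q in ZSpan.fundamentalDomain (stdBasis d), ψ q := hFD'.setIntegral_eq hFD hinv
  have him : (Equiv.addRight a) '' (ZSpan.fundamentalDomain (stdBasis d))
      = (fun x : Ed d => x + a) '' (ZSpan.fundamentalDomain (stdBasis d)) := rfl
  calc ∫ q in cube d, ψ (q + a)
      = ∫ q in ZSpan.fundamentalDomain (stdBasis d), ψ (q + a) :=
        MeasureTheory.setIntegral_congr_set cube_ae_fd
    _ = ∫ q in (fun x : Ed d => x + a) '' ZSpan.fundamentalDomain (stdBasis d), ψ q :=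
        (hmp.setIntegral_image_emb hemb _ _).symm
    _ = ∫ q in ZSpan.fundamentalDomain (stdBasis d), ψ q := by rw [← him]; exact key
    _ = ∫ q in cube d, ψ q := (MeasureTheory.setIntegral_congr_set cube_ae_fd).symm

end Aux
section Aux2
variable {d : ℕ}

lemma isCompact_cube : IsCompact (cube d) := by
  refine Metric.isCompact_of_isClosed_isBounded ?_ ?_
  · have h : cube d = ⋂ i, (fun q : Ed d => q i) ⁻¹' (Set.Icc (0:ℝ) 1) := by
      ext q; simp [cube, Set.mem_iInter]
    rw [h]
    exact isClosed_iInter fun i =>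
      IsClosed.preimage ((continuous_apply i).comp (PiLp.continuous_ofLp 2 fun _ : Fin d => ℝ))
        isClosed_Icc
  · rw [Metric.isBounded_iff_subset_closedBall 0]
    refine ⟨Real.sqrt d, fun q hq => ?_⟩
    simp only [Metric.mem_closedBall, dist_zero_right]
    rw [EuclideanSpace.norm_eq]
    refine Real.sqrt_le_sqrt ?_
    calc ∑ i, ‖q i‖ ^ 2 ≤ ∑ _i : Fin d, (1:ℝ) := by
          refine Finset.sum_le_sum fun i _ => ?_
          have h1 := (hq i).1; have h2 := (hq i).2
          have hle : ‖q i‖ ≤ 1 := by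
            rw [Real.norm_eq_abs, abs_le]; constructor <;> linarith
          calc ‖q i‖ ^ 2 ≤ 1 ^ 2 := by
                exact pow_le_pow_left₀ (norm_nonneg _) hle 2
            _ = 1 := one_pow 2
      _ = (d : ℝ) := by simp
    
lemma integrableOn_cube {f : Ed d → ℂ} (hf : Continuous f) :
    MeasureTheory.IntegrableOn f (cube d) MeasureTheory.volume :=
  hf.continuousOn.integrableOn_compact isCompact_cube

/-- The character `q ↦ e^{-2πi⟨ν,q⟩}`. -/
noncomputable def charf (ν : Fin d → ℤ) (q : Ed d) : ℂ :=
  Complex.exp (-(2 * Real.pi * Complex.I) * ∑ i, (ν i : ℂ) * (q i : ℂ))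

lemma continuous_charf (ν : Fin d → ℤ) : Continuous (charf ν) := by
  refine Complex.continuous_exp.comp (continuous_const.mul ?_)
  refine continuous_finset_sum _ fun i _ => continuous_const.mul ?_
  exact Complex.continuous_ofReal.comp
    ((continuous_apply i).comp (PiLp.continuous_ofLp 2 fun _ : Fin d => ℝ))

lemma charf_add (ν : Fin d → ℤ) (q a : Ed d) :
    charf ν (q + a) = charf ν q * Complex.exp (-(2 * Real.pi * Complex.I)
      * ∑ i, (ν i : ℂ) * (a i : ℂ)) := by
  rw [charf, charf, ← Complex.exp_add]
  congr 1
  have : ∀ i, ((q + a) i : ℂ) = (q i : ℂ) + (a i : ℂ) := fun i => by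
    have : (q + a) i = q i + a i := rfl
    rw [this]; push_cast; ring
  rw [← mul_add, ← Finset.sum_add_distrib]
  congr 1
  refine Finset.sum_congr rfl fun i _ => ?_
  rw [this i]; ring

lemma charf_int (ν : Fin d → ℤ) (a : Ed d) (k : ℤ)
    (hk : ∑ i, (ν i : ℝ) * a i = (k : ℝ)) :
    Complex.exp (-(2 * Real.pi * Complex.I) * ∑ i, (ν i : ℂ) * (a i : ℂ)) = 1 := by
  have hsum : (∑ i, (ν i : ℂ) * (a i : ℂ)) = (k : ℂ) := by
    have := congrArg (fun r : ℝ => (r : ℂ)) hk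
    push_cast at this ⊢
    convert this using 2
  rw [hsum]
  have : -(2 * (Real.pi:ℂ) * Complex.I) * (k:ℂ) = (-k : ℤ) * (2 * (Real.pi:ℂ) * Complex.I) := by
    push_cast; ring
  rw [this, Complex.exp_int_mul_two_pi_mul_I]

lemma charf_periodic (ν : Fin d → ℤ) (m : Fin d → ℤ) (q : Ed d) :
    charf ν (q + intVec d m) = charf ν q := by
  rw [charf_add, charf_int ν (intVec d m) (∑ i, ν i * m i), mul_one]
  push_cast
  rfl

lemma cube_integral_charf_zero (ν : Fin d → ℤ) (hν : ν ≠ 0) :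
    ∫ q in cube d, charf ν q = 0 := by
  have hex : ∃ i₀, ν i₀ ≠ 0 := by
    by_contra h
    push_neg at h
    exact hν (funext fun i => h i)
  obtain ⟨i₀, hi₀⟩ := hex
  set a : Ed d := EuclideanSpace.single i₀ ((2 * (ν i₀ : ℝ))⁻¹) with ha
  have hsum : (∑ i, (ν i : ℂ) * (a i : ℂ)) = (1/2 : ℂ) := by
    have hne : (ν i₀ : ℂ) ≠ 0 := Int.cast_ne_zero.mpr hi₀
    have h1 : (∑ i, (ν i : ℂ) * (a i : ℂ))
        = (ν i₀ : ℂ) * (((2 * (ν i₀:ℝ))⁻¹ : ℝ) : ℂ) := by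
      rw [Finset.sum_eq_single i₀]
      · rw [ha]; simp [EuclideanSpace.single_apply]
      · intro b _ hb
        rw [ha]
        simp [EuclideanSpace.single_apply, hb]
      · simp
    rw [h1]
    push_cast
    field_simp
  have hshift : ∀ q, charf ν (q + a) = - charf ν q := by
    intro q
    rw [charf_add, hsum]
    have : -(2 * (Real.pi:ℂ) * Complex.I) * (1/2 : ℂ) = -(Real.pi * Complex.I) := by ring
    rw [this]
    have : Complex.exp (-(Real.pi * Complex.I)) = -1 := by
      rw [Complex.exp_neg, Complex.exp_pi_mul_I]
      norm_num
    rw [this]; ring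
  have htr := cube_integral_translate (charf ν) (charf_periodic ν) a
  have : ∫ q in cube d, charf ν (q + a) = - ∫ q in cube d, charf ν q := by
    rw [MeasureTheory.integral_congr_ae (Filter.Eventually.of_forall fun q => hshift q)]
    exact MeasureTheory.integral_neg _
  rw [this] at htr
  linear_combination (-1/2 : ℂ) * htr

end Aux2
section Aux3
variable {d : ℕ}

lemma fourierCoeffT_eq_cube (G : Ed d → ℝ) (ν : Fin d → ℤ) :
    fourierCoeffT G ν = ∫ q in cube d, (G q : ℂ) * charf ν q := rfl

/-- Key Fourier step: if `q ↦ ∑_{k<n} G(q + kρ)` is constant and `⟨ν, ρ⟩ ∈ ℤ`, `ν ≠ 0`,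
then the `ν`-th Fourier coefficient of `G` vanishes. -/
lemma fourier_vanish (G : Ed d → ℝ) (hGc : Continuous G) (hGper : ZdPeriodicFun G)
    (ν : Fin d → ℤ) (hν : ν ≠ 0) (ρ : Ed d) (n : ℕ) (hn : 0 < n) (k0 : ℤ)
    (hk0 : ∑ i, (ν i : ℝ) * ρ i = (k0 : ℝ)) (C : ℝ)
    (hconst : ∀ q : Ed d, ∑ k ∈ Finset.range n, G (q + (k:ℝ) • ρ) = C) :
    fourierCoeffT G ν = 0 := by
  classical
  set ψ : Ed d → ℂ := fun q => (G q : ℂ) * charf ν q with hψ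
  have hψc : Continuous ψ :=
    (Complex.continuous_ofReal.comp hGc).mul (continuous_charf ν)
  have hψper : ∀ (m : Fin d → ℤ) (q : Ed d), ψ (q + intVec d m) = ψ q := by
    intro m q
    rw [hψ]
    simp only
    rw [hGper m q, charf_periodic ν m q]
  have hcharf_shift : ∀ (k : ℕ) (q : Ed d), charf ν (q + (k:ℝ) • ρ) = charf ν q := by
    intro k q
    rw [charf_add, charf_int ν ((k:ℝ) • ρ) ((k:ℤ) * k0), mul_one]
    have : ∀ i, ((k:ℝ) • ρ) i = (k:ℝ) * ρ i := fun i => rfl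
    rw [Finset.sum_congr rfl fun i _ => by rw [this i]]
    push_cast
    have h2 : ∑ x, (ν x:ℝ) * ((k:ℝ) * ρ x) = (k:ℝ) * ∑ x, (ν x:ℝ) * ρ x := by
      rw [Finset.mul_sum]; exact Finset.sum_congr rfl fun i _ => by ring
    rw [h2, hk0]
  have hterm : ∀ k : ℕ, ∫ q in cube d, ψ q
      = ∫ q in cube d, (G (q + (k:ℝ) • ρ) : ℂ) * charf ν q := by
    intro k
    rw [← cube_integral_translate ψ hψper ((k:ℝ) • ρ)]
    refine MeasureTheory.setIntegral_congr_fun measurableSet_cube fun q _ => ?_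
    rw [hψ]
    simp only
    rw [hcharf_shift k q]
  have hsum1 : (n : ℂ) * fourierCoeffT G ν
      = ∑ k ∈ Finset.range n, ∫ q in cube d, (G (q + (k:ℝ) • ρ) : ℂ) * charf ν q := by
    rw [Finset.sum_congr rfl fun k _ => (hterm k).symm]
    rw [Finset.sum_const, Finset.card_range, fourierCoeffT_eq_cube]
    simp [nsmul_eq_mul]
    exact Or.inl rfl
  have hsum2 : ∑ k ∈ Finset.range n, ∫ q in cube d, (G (q + (k:ℝ) • ρ) : ℂ) * charf ν q
      = ∫ q in cube d, ∑ k ∈ Finset.range n, (G (q + (k:ℝ) • ρ) : ℂ) * charf ν q := by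
    rw [MeasureTheory.integral_finset_sum]
    intro k _
    refine integrableOn_cube ?_
    refine Continuous.mul ?_ (continuous_charf ν)
    exact Complex.continuous_ofReal.comp (hGc.comp (continuous_id.add continuous_const))
  have hsum3 : ∫ q in cube d, ∑ k ∈ Finset.range n, (G (q + (k:ℝ) • ρ) : ℂ) * charf ν q
      = (C : ℂ) * ∫ q in cube d, charf ν q := by
    rw [← MeasureTheory.integral_const_mul]
    refine MeasureTheory.setIntegral_congr_fun measurableSet_cube fun q _ => ?_
    rw [← Finset.sum_mul]
    congr 1
    rw [← hconst q]
    push_cast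
    rfl
  have : (n : ℂ) * fourierCoeffT G ν = 0 := by
    rw [hsum1, hsum2, hsum3, cube_integral_charf_zero ν hν, mul_zero]
  have hn' : (n : ℂ) ≠ 0 := Nat.cast_ne_zero.mpr hn.ne'
  exact (mul_eq_zero.mp this).resolve_left hn'

end Aux3
section Aux4
variable {d : ℕ}

lemma pairing_eq_inner (p v : Ed d) : pairing p v = (inner ℝ p v : ℝ) := by
  rw [pairing, PiLp.inner_apply]
  simp [RCLike.inner_apply, conj_trivial]
  exact Finset.sum_congr rfl fun i _ => mul_comm _ _

lemma pairing_single (x : Ed d) (i : Fin d) :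
    pairing x (EuclideanSpace.single i (1:ℝ)) = x i := by
  rw [pairing]
  rw [Finset.sum_eq_single i]
  · simp [EuclideanSpace.single_apply]
  · intro b _ hb; simp [EuclideanSpace.single_apply, hb]
  · simp

lemma eq_of_pairing {x y : Ed d} (h : ∀ v, pairing x v = pairing y v) : x = y := by
  ext i
  have := h (EuclideanSpace.single i (1:ℝ))
  rwa [pairing_single, pairing_single] at this

lemma pairing_add_left (x y v : Ed d) : pairing (x + y) v = pairing x v + pairing y v := by
  simp [pairing_eq_inner, inner_add_left]

lemma pairing_sub_left (x y v : Ed d) : pairing (x - y) v = pairing x v - pairing y v := by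
  simp [pairing_eq_inner, inner_sub_left]

lemma pairing_smul_left (c : ℝ) (x v : Ed d) : pairing (c • x) v = c * pairing x v := by
  simp only [pairing, PiLp.smul_apply, smul_eq_mul, Finset.mul_sum]
  exact Finset.sum_congr rfl fun i _ => by ring

lemma pairing_le_norm (x v : Ed d) : pairing x v ≤ ‖x‖ * ‖v‖ := by
  rw [pairing_eq_inner]; exact real_inner_le_norm x v

lemma pairing_comm (x v : Ed d) : pairing x v = pairing v x := by
  simp only [pairing]
  exact Finset.sum_congr rfl fun i _ => mul_comm _ _

/-- The gradient of `G : ℝ^d → ℝ`. -/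
noncomputable def gradf (G : Ed d → ℝ) (q : Ed d) : Ed d :=
  (WithLp.equiv 2 (Fin d → ℝ)).symm fun i => fderiv ℝ G q (EuclideanSpace.single i (1:ℝ))

lemma gradf_apply (G : Ed d → ℝ) (q : Ed d) (i : Fin d) :
    gradf G q i = fderiv ℝ G q (EuclideanSpace.single i (1:ℝ)) := rfl

lemma sum_single_eq (v : Ed d) : (∑ i, v i • EuclideanSpace.single i (1:ℝ)) = v := by
  ext j
  have h1 : (∑ i, v i • EuclideanSpace.single i (1:ℝ)) j
      = ∑ i, (v i • EuclideanSpace.single i (1:ℝ)) j := by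
    rw [WithLp.ofLp_sum, Finset.sum_apply]
  rw [h1]
  rw [Finset.sum_eq_single j]
  · simp [EuclideanSpace.single_apply]
  · intro b _ hb
    simp [EuclideanSpace.single_apply, Ne.symm hb]
  · simp

lemma pairing_gradf {G : Ed d → ℝ} {q : Ed d} (hG : DifferentiableAt ℝ G q) (v : Ed d) :
    pairing (gradf G q) v = fderiv ℝ G q v := by
  conv_rhs => rw [← sum_single_eq v]
  rw [map_sum]
  rw [pairing]
  refine Finset.sum_congr rfl fun i _ => ?_
  rw [gradf_apply, (fderiv ℝ G q).map_smul]
  simp [smul_eq_mul, mul_comm]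

lemma continuous_gradf {G : Ed d → ℝ} (hG : ContDiff ℝ 2 G) : Continuous (gradf G) := by
  refine (PiLp.continuous_toLp 2 fun _ : Fin d => ℝ).comp ?_
  refine continuous_pi fun i => ?_
  exact (hG.continuous_fderiv two_ne_zero).clm_apply continuous_const

lemma gradf_periodic {G : Ed d → ℝ} (hG : ContDiff ℝ 2 G) (hGper : ZdPeriodicFun G)
    (m : Fin d → ℤ) (q : Ed d) : gradf G (q + intVec d m) = gradf G q := by
  have hdiff := hG.differentiable two_ne_zero
  have hfd : ∀ x : Ed d, fderiv ℝ G (x + intVec d m) = fderiv ℝ G x := by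
    intro x
    have hcomp : HasFDerivAt (fun y : Ed d => G (y + intVec d m))
        (fderiv ℝ G (x + intVec d m)) x := by
      have h1 : HasFDerivAt (fun y : Ed d => y + intVec d m)
          (ContinuousLinearMap.id ℝ (Ed d)) x := (hasFDerivAt_id x).add_const _
      have h2 := (hdiff (x + intVec d m)).hasFDerivAt
      have := h2.comp x h1
      exact this
    have heq : (fun y : Ed d => G (y + intVec d m)) = G := funext fun y => hGper m y
    rw [heq] at hcomp
    exact (hcomp.fderiv).symm
  ext i
  rw [gradf_apply, gradf_apply, hfd q]

lemma exists_translate_mem_cube (q : Ed d) :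
    ∃ m : Fin d → ℤ, q + intVec d m ∈ cube d := by
  refine ⟨fun i => -⌊q i⌋, fun i => ?_⟩
  have : (q + intVec d (fun i => -⌊q i⌋)) i = q i - ⌊q i⌋ := by
    have : (q + intVec d (fun i => -⌊q i⌋)) i = q i + ((-⌊q i⌋ : ℤ) : ℝ) := rfl
    rw [this]; push_cast; ring
  rw [this]
  constructor
  · linarith [Int.floor_le (q i)]
  · linarith [Int.lt_floor_add_one (q i)]

lemma gradf_bound {G : Ed d → ℝ} (hG : ContDiff ℝ 2 G) (hGper : ZdPeriodicFun G) :
    ∃ M : ℝ, 0 ≤ M ∧ ∀ q, ‖gradf G q‖ ≤ M := by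
  obtain ⟨C, hC⟩ := isCompact_cube.exists_bound_of_continuousOn
    (continuous_gradf hG).continuousOn
  refine ⟨max C 0, le_max_right C 0, fun q => ?_⟩
  obtain ⟨m, hm⟩ := exists_translate_mem_cube q
  have : gradf G q = gradf G (q + intVec d m) := (gradf_periodic hG hGper m q).symm
  rw [this]
  exact le_trans (hC _ hm) (le_max_left C 0)

end Aux4
section Aux5
variable {d : ℕ}

lemma genfun_dq_eq {F : Ed d × Ed d → Ed d × Ed d} {S : Ed d × Ed d → ℝ}
    {g ginv : Ed d → Ed d} (hFS : IsGenFun F S)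
    (hF : ∀ q p, F (q, p) = (q + g p, p)) (hgr : Function.RightInverse ginv g) :
    ∀ q Q v, fderiv ℝ (fun q' => S (q', Q)) q v = -(pairing (ginv (Q - q)) v) := by
  intro q Q v
  have h := hFS.dq q (ginv (Q - q)) v
  rw [hF q (ginv (Q - q))] at h
  simp only at h
  rw [hgr (Q - q)] at h
  have hQ : q + (Q - q) = Q := by abel
  rw [hQ] at h
  exact h

lemma genfun_dQ_eq {F : Ed d × Ed d → Ed d × Ed d} {S : Ed d × Ed d → ℝ}
    {g ginv : Ed d → Ed d} (hFS : IsGenFun F S)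
    (hF : ∀ q p, F (q, p) = (q + g p, p)) (hgr : Function.RightInverse ginv g) :
    ∀ q Q v, fderiv ℝ (fun Q' => S (q, Q')) Q v = pairing (ginv (Q - q)) v := by
  intro q Q v
  have h := hFS.dQ q (ginv (Q - q)) v
  rw [hF q (ginv (Q - q))] at h
  simp only at h
  rw [hgr (Q - q)] at h
  have hQ : q + (Q - q) = Q := by abel
  rw [hQ] at h
  exact h

/-- Explicit formula for the perturbed maps `F_ε`. -/
lemma family_formula {S : Ed d × Ed d → ℝ} (hS : ContDiff ℝ 2 S)
    {G : Ed d → ℝ} (hG : ContDiff ℝ 2 G)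
    {g ginv : Ed d → Ed d} (hgr : Function.RightInverse ginv g)
    (hB1 : ∀ q Q v, fderiv ℝ (fun q' => S (q', Q)) q v = -(pairing (ginv (Q - q)) v))
    (hB2 : ∀ q Q v, fderiv ℝ (fun Q' => S (q, Q')) Q v = pairing (ginv (Q - q)) v)
    (ε : ℝ) {Fe : Ed d × Ed d → Ed d × Ed d}
    (hfe : IsGenFun Fe (fun x => S x + ε * G x.1)) (q p : Ed d) :
    Fe (q, p) = (q + g (p + ε • gradf G q), p + ε • gradf G q) := by
  have hGd : Differentiable ℝ G := hG.differentiable two_ne_zero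
  have hSd : Differentiable ℝ S := hS.differentiable two_ne_zero
  set Qe := (Fe (q, p)).1 with hQe
  set Pe := (Fe (q, p)).2 with hPe
  -- the dQ equation
  have hdQ : ∀ v, pairing (ginv (Qe - q)) v = pairing Pe v := by
    intro v
    have h := hfe.dQ q p v
    have heq : (fun Q' => S (q, Q') + ε * G (q, Q').1) = fun Q' => S (q, Q') + ε * G q := rfl
    rw [heq] at h
    rw [fderiv_add_const (ε * G q)] at h
    rw [hB2 q Qe v] at h
    exact h
  have hPeq : ginv (Qe - q) = Pe := eq_of_pairing hdQ
  -- the dq equation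
  have hdq : ∀ v, -(pairing (ginv (Qe - q)) v) + ε * fderiv ℝ G q v = -(pairing p v) := by
    intro v
    have h := hfe.dq q p v
    have heq : (fun q' => S (q', (Fe (q, p)).1) + ε * G (q', (Fe (q, p)).1).1)
        = fun q' => S (q', Qe) + ε * G q' := rfl
    rw [heq] at h
    have hd1 : DifferentiableAt ℝ (fun q' => S (q', Qe)) q :=
      (hSd (q, Qe)).comp q (differentiableAt_id.prodMk (differentiableAt_const Qe))
    have hd2 : DifferentiableAt ℝ (fun q' => ε * G q') q := (hGd q).const_mul ε
    rw [fderiv_fun_add hd1 hd2] at h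
    rw [ContinuousLinearMap.add_apply] at h
    rw [hB1 q Qe v] at h
    rw [fderiv_const_mul (hGd q) ε] at h
    exact h
  have hkey : ∀ v, pairing (ginv (Qe - q)) v = pairing (p + ε • gradf G q) v := by
    intro v
    have h := hdq v
    rw [pairing_add_left, pairing_smul_left, pairing_gradf (hGd q) v]
    linarith [h]
  have hP : Pe = p + ε • gradf G q := by rw [← hPeq]; exact eq_of_pairing hkey
  have hQ : Qe = q + g (p + ε • gradf G q) := by
    have h1 : ginv (Qe - q) = p + ε • gradf G q := eq_of_pairing hkey
    have h2 := congrArg g h1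
    rw [hgr (Qe - q)] at h2
    rw [← h2]; abel
  calc Fe (q, p) = (Qe, Pe) := rfl
    _ = (q + g (p + ε • gradf G q), p + ε • gradf G q) := by rw [hP, hQ]

/-- Strong monotonicity of `g⁻¹` from strong positivity of `S`. -/
lemma ginv_strong_mono {S : Ed d × Ed d → ℝ}
    {ginv : Ed d → Ed d} (hginv : ContDiff ℝ 1 ginv)
    (hB1 : ∀ q Q v, fderiv ℝ (fun q' => S (q', Q)) q v = -(pairing (ginv (Q - q)) v))
    {α : ℝ} (hα : 0 < α)
    (hpos : ∀ q Q v, mixedS S q Q v ≤ -α * ‖v‖ ^ 2) :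
    ∀ x y : Ed d, α * ‖x - y‖ ^ 2 ≤ pairing (ginv x - ginv y) (x - y) := by
  have hginvd : Differentiable ℝ ginv := hginv.differentiable one_ne_zero
  -- step (a): pointwise bound on the derivative of ginv
  have hstep : ∀ u v : Ed d, α * ‖v‖ ^ 2 ≤ pairing (fderiv ℝ ginv u v) v := by
    intro u v
    have h := hpos 0 u v
    have hfun : (fun Q' => fderiv ℝ (fun q' => S (q', Q')) 0 v)
        = fun Q' => -(pairing (ginv Q') v) := by
      funext Q'
      rw [hB1 0 Q' v]
      rw [sub_zero]
    have hm : mixedS S 0 u v = -(pairing (fderiv ℝ ginv u v) v) := by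
      rw [mixedS, hfun]
      have hgi : HasFDerivAt ginv (fderiv ℝ ginv u) u := (hginvd u).hasFDerivAt
      have hcomp : HasFDerivAt (fun Q' => pairing (ginv Q') v)
          ((innerSL ℝ v).comp (fderiv ℝ ginv u)) u := by
        have h2 : HasFDerivAt (fun w : Ed d => (inner ℝ v w : ℝ)) (innerSL ℝ v) (ginv u) :=
          (innerSL ℝ v).hasFDerivAt
        have h3 := h2.comp u hgi
        have h4 : (fun Q' => (inner ℝ v (ginv Q') : ℝ)) = fun Q' => pairing (ginv Q') v := by
          funext Q'
          rw [pairing_eq_inner]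
          exact (real_inner_comm v (ginv Q')).symm
        rw [← h4]
        exact h3
      have h5 : HasFDerivAt (fun Q' => -(pairing (ginv Q') v))
          (-((innerSL ℝ v).comp (fderiv ℝ ginv u))) u := hcomp.neg
      rw [h5.fderiv]
      simp only [ContinuousLinearMap.neg_apply, ContinuousLinearMap.coe_comp',
        Function.comp_apply, innerSL_apply_apply]
      rw [pairing_eq_inner]
      rw [real_inner_comm]
    rw [hm] at h
    nlinarith [h]
  -- step (b): integrate along segments
  intro x y
  set v₀ := x - y with hv₀
  set φ : ℝ → ℝ := fun t => pairing (ginv (y + t • v₀)) v₀ with hφ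
  have hφd : ∀ t : ℝ, HasDerivAt φ (pairing (fderiv ℝ ginv (y + t • v₀) v₀) v₀) t := by
    intro t
    have hc : HasDerivAt (fun t : ℝ => y + t • v₀) v₀ t := by
      have h1 : HasDerivAt (fun t : ℝ => t • v₀) v₀ t := by
        simpa using (hasDerivAt_id t).smul_const v₀
      simpa using h1.const_add y
    have hgi : HasFDerivAt ginv (fderiv ℝ ginv (y + t • v₀)) (y + t • v₀) :=
      (hginvd _).hasFDerivAt
    have h2 : HasDerivAt (fun t : ℝ => ginv (y + t • v₀)) (fderiv ℝ ginv (y + t • v₀) v₀) t :=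
      hgi.comp_hasDerivAt t hc
    have h3 : HasDerivAt (fun t : ℝ => (inner ℝ v₀ (ginv (y + t • v₀)) : ℝ))
        (inner ℝ v₀ (fderiv ℝ ginv (y + t • v₀) v₀) : ℝ) t :=
      ((innerSL ℝ v₀).hasFDerivAt.comp_hasDerivAt t h2)
    have h4 : φ = fun t : ℝ => (inner ℝ v₀ (ginv (y + t • v₀)) : ℝ) := by
      funext t
      rw [hφ]
      simp only
      rw [pairing_eq_inner]
      exact real_inner_comm _ _
    rw [h4]
    convert h3 using 1
    rw [pairing_eq_inner]
    exact real_inner_comm _ _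
  set ψ : ℝ → ℝ := fun t => φ t - t * (α * ‖v₀‖ ^ 2) with hψ
  have hψd : ∀ t : ℝ, HasDerivAt ψ
      (pairing (fderiv ℝ ginv (y + t • v₀) v₀) v₀ - α * ‖v₀‖ ^ 2) t := by
    intro t
    have h1 : HasDerivAt (fun t : ℝ => t * (α * ‖v₀‖ ^ 2)) (α * ‖v₀‖ ^ 2) t := by
      simpa using (hasDerivAt_id t).mul_const (α * ‖v₀‖ ^ 2)
    exact (hφd t).sub h1
  have hmono : Monotone ψ := by
    refine monotone_of_deriv_nonneg (fun t => (hψd t).differentiableAt) fun t => ?_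
    rw [(hψd t).deriv]
    have := hstep (y + t • v₀) v₀
    linarith
  have h01 := hmono (by norm_num : (0:ℝ) ≤ 1)
  have hψ0 : ψ 0 = pairing (ginv y) v₀ := by simp [hψ, hφ]
  have hψ1 : ψ 1 = pairing (ginv x) v₀ - α * ‖v₀‖ ^ 2 := by
    have h1 : y + (1:ℝ) • v₀ = x := by rw [hv₀]; rw [one_smul]; abel
    simp only [hψ, hφ, h1, one_mul]
  rw [hψ0, hψ1] at h01
  rw [pairing_sub_left]
  linarith

/-- `g` is `α⁻¹`-Lipschitz. -/
lemma g_lip {g ginv : Ed d → Ed d} (hgl : Function.LeftInverse ginv g)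
    {α : ℝ} (hα : 0 < α)
    (hmono : ∀ x y : Ed d, α * ‖x - y‖ ^ 2 ≤ pairing (ginv x - ginv y) (x - y)) :
    ∀ a b : Ed d, ‖g a - g b‖ ≤ α⁻¹ * ‖a - b‖ := by
  intro a b
  have h := hmono (g a) (g b)
  rw [hgl a, hgl b] at h
  have hcs : pairing (a - b) (g a - g b) ≤ ‖a - b‖ * ‖g a - g b‖ := pairing_le_norm _ _
  by_cases hz : g a = g b
  · rw [hz]
    simp
    positivity
  · have hpos : 0 < ‖g a - g b‖ := by
      rw [norm_pos_iff, sub_ne_zero]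
      exact hz
    have h2 : α * ‖g a - g b‖ ^ 2 ≤ ‖a - b‖ * ‖g a - g b‖ := le_trans h hcs
    have h3 : α * ‖g a - g b‖ ≤ ‖a - b‖ := by nlinarith
    rw [← mul_le_mul_iff_right₀ hα]
    calc α * ‖g a - g b‖ ≤ ‖a - b‖ := h3
      _ = α * (α⁻¹ * ‖a - b‖) := by field_simp

end Aux5
section Aux6
variable {d : ℕ}

lemma orbit_analysis
    {G : Ed d → ℝ} {g : Ed d → Ed d}
    {Fe : Ed d × Ed d → Ed d × Ed d} {ε : ℝ} (hε : ε ≠ 0)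
    (hform : ∀ q p, Fe (q, p) = (q + g (p + ε • gradf G q), p + ε • gradf G q))
    {m : Fin d → ℤ} {n : ℕ} (hn : 0 < n) {γ : Ed d → Ed d}
    (hgraph : IsPeriodicGraph Fe m n γ)
    {M : ℝ} (hM : ∀ q, ‖gradf G q‖ ≤ M)
    {Lg : ℝ} (hLg0 : 0 ≤ Lg) (hLip : ∀ a b : Ed d, ‖g a - g b‖ ≤ Lg * ‖a - b‖)
    (q : Ed d) :
    (∑ k ∈ Finset.range n, gradf G ((Fe^[k] (q, γ q)).1)) = 0 ∧
    ∀ k, k < n → ‖(Fe^[k] (q, γ q)).1 - (q + (k:ℝ) • ((n:ℝ)⁻¹ • intVec d m))‖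
      ≤ 2 * Lg * (n:ℝ)^2 * M * |ε| := by
  have hM0 : 0 ≤ M := le_trans (norm_nonneg _) (hM 0)
  set x : ℕ → Ed d × Ed d := fun k => Fe^[k] (q, γ q) with hx
  set qk : ℕ → Ed d := fun k => (x k).1 with hqk
  set pk : ℕ → Ed d := fun k => (x k).2 with hpk
  have hstep : ∀ k, x (k + 1) = Fe (x k) := by
    intro k
    rw [hx]
    simp only
    rw [Function.iterate_succ_apply' Fe k (q, γ q)]
  have hq0 : qk 0 = q := rfl
  have hp0 : pk 0 = γ q := rfl
  have hp : ∀ k, pk (k + 1) = pk k + ε • gradf G (qk k) := by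
    intro k
    rw [hpk]
    simp only
    rw [hstep k]
    have : Fe (x k) = Fe ((x k).1, (x k).2) := by rw [Prod.mk.eta]
    rw [this, hform (x k).1 (x k).2]
  have hq : ∀ k, qk (k + 1) = qk k + g (pk (k + 1)) := by
    intro k
    rw [hqk]
    simp only
    rw [hstep k]
    have h1 : Fe (x k) = Fe ((x k).1, (x k).2) := by rw [Prod.mk.eta]
    rw [h1, hform (x k).1 (x k).2]
    simp only
    rw [hp k]
  have hpsum : ∀ k, pk k = pk 0 + ε • ∑ j ∈ Finset.range k, gradf G (qk j) := by
    intro k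
    induction k with
    | zero => simp
    | succ k ih =>
      rw [hp k, ih, Finset.sum_range_succ, smul_add]
      abel
  have hqsum : ∀ k, qk k = q + ∑ j ∈ Finset.range k, g (pk (j + 1)) := by
    intro k
    induction k with
    | zero => simp [hq0]
    | succ k ih =>
      rw [hq k, ih, Finset.sum_range_succ]
      abel
  have hend : x n = (q + intVec d m, γ q) := hgraph q
  have hqend : qk n = q + intVec d m := by rw [hqk]; simp only; rw [hend]
  have hpend : pk n = γ q := by rw [hpk]; simp only; rw [hend]
  -- (I) the sum of gradients vanishes
  have hsumzero : (∑ j ∈ Finset.range n, gradf G (qk j)) = 0 := by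
    have h1 := hpsum n
    rw [hpend, hp0] at h1
    have h2 : ε • ∑ j ∈ Finset.range n, gradf G (qk j) = 0 := by
      have := congrArg (fun z => z - γ q) h1
      simpa using this.symm
    rcases smul_eq_zero.mp h2 with h | h
    · exact absurd h hε
    · exact h
  -- (II)
  have hgsum : (∑ j ∈ Finset.range n, g (pk (j + 1))) = intVec d m := by
    have h1 := hqsum n
    rw [hqend] at h1
    have := congrArg (fun z => z - q) h1
    simp only [add_sub_cancel_left] at this
    exact this.symm
  -- norm bounds on pk
  have hpb : ∀ k, k ≤ n → ‖pk k - pk 0‖ ≤ |ε| * n * M := by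
    intro k hk
    have h1 : pk k - pk 0 = ε • ∑ j ∈ Finset.range k, gradf G (qk j) := by
      rw [hpsum k]; abel
    rw [h1, norm_smul, Real.norm_eq_abs]
    have h2 : ‖∑ j ∈ Finset.range k, gradf G (qk j)‖ ≤ (k : ℝ) * M := by
      refine le_trans (norm_sum_le _ _) ?_
      calc ∑ j ∈ Finset.range k, ‖gradf G (qk j)‖ ≤ ∑ _j ∈ Finset.range k, M :=
            Finset.sum_le_sum fun j _ => hM (qk j)
        _ = (k : ℝ) * M := by rw [Finset.sum_const, Finset.card_range, nsmul_eq_mul]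
    calc |ε| * ‖∑ j ∈ Finset.range k, gradf G (qk j)‖ ≤ |ε| * ((k:ℝ) * M) := by
          exact mul_le_mul_of_nonneg_left h2 (abs_nonneg ε)
      _ ≤ |ε| * ((n:ℝ) * M) := by
          have : (k:ℝ) ≤ (n:ℝ) := Nat.cast_le.mpr hk
          have := mul_le_mul_of_nonneg_right this hM0
          exact mul_le_mul_of_nonneg_left this (abs_nonneg ε)
      _ = |ε| * n * M := by ring
  set ρ : Ed d := (n:ℝ)⁻¹ • intVec d m with hρ
  have hn' : ((n:ℝ)) ≠ 0 := Nat.cast_ne_zero.mpr hn.ne'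
  -- bound on ‖g (pk 0) - ρ‖
  have hgp0 : ‖g (pk 0) - ρ‖ ≤ Lg * (|ε| * n * M) := by
    have h1 : intVec d m - (n:ℝ) • g (pk 0) = ∑ j ∈ Finset.range n, (g (pk (j+1)) - g (pk 0)) := by
      rw [Finset.sum_sub_distrib, hgsum, Finset.sum_const, Finset.card_range]
      rw [← Nat.cast_smul_eq_nsmul ℝ n (g (pk 0))]
    have h2 : ‖intVec d m - (n:ℝ) • g (pk 0)‖ ≤ (n:ℝ) * (Lg * (|ε| * n * M)) := by
      rw [h1]
      refine le_trans (norm_sum_le _ _) ?_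
      calc ∑ j ∈ Finset.range n, ‖g (pk (j+1)) - g (pk 0)‖
          ≤ ∑ j ∈ Finset.range n, Lg * (|ε| * n * M) := by
            refine Finset.sum_le_sum fun j hj => ?_
            refine le_trans (hLip _ _) ?_
            refine mul_le_mul_of_nonneg_left ?_ hLg0
            exact hpb (j+1) (Nat.succ_le_of_lt (Finset.mem_range.mp hj))
        _ = (n:ℝ) * (Lg * (|ε| * n * M)) := by
            rw [Finset.sum_const, Finset.card_range, nsmul_eq_mul]
    have h3 : g (pk 0) - ρ = -((n:ℝ)⁻¹ • (intVec d m - (n:ℝ) • g (pk 0))) := by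
      rw [hρ, smul_sub, smul_smul, inv_mul_cancel₀ hn', one_smul]
      abel
    rw [h3, norm_neg, norm_smul, Real.norm_eq_abs, abs_inv, Nat.abs_cast]
    calc ((n:ℝ))⁻¹ * ‖intVec d m - (n:ℝ) • g (pk 0)‖
        ≤ ((n:ℝ))⁻¹ * ((n:ℝ) * (Lg * (|ε| * n * M))) := by
          refine mul_le_mul_of_nonneg_left h2 ?_
          positivity
      _ = Lg * (|ε| * n * M) := by field_simp
  -- bound on each step
  have hgpj : ∀ j, j + 1 ≤ n → ‖g (pk (j+1)) - ρ‖ ≤ 2 * (Lg * (|ε| * n * M)) := by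
    intro j hj
    have h1 : ‖g (pk (j+1)) - g (pk 0)‖ ≤ Lg * (|ε| * n * M) := by
      refine le_trans (hLip _ _) ?_
      exact mul_le_mul_of_nonneg_left (hpb (j+1) hj) hLg0
    calc ‖g (pk (j+1)) - ρ‖ = ‖(g (pk (j+1)) - g (pk 0)) + (g (pk 0) - ρ)‖ := by
          congr 1; abel
      _ ≤ ‖g (pk (j+1)) - g (pk 0)‖ + ‖g (pk 0) - ρ‖ := norm_add_le _ _
      _ ≤ Lg * (|ε| * n * M) + Lg * (|ε| * n * M) := add_le_add h1 hgp0
      _ = 2 * (Lg * (|ε| * n * M)) := by ring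
  refine ⟨hsumzero, fun k hk => ?_⟩
  have hdev : qk k - (q + (k:ℝ) • ρ) = ∑ j ∈ Finset.range k, (g (pk (j+1)) - ρ) := by
    rw [Finset.sum_sub_distrib]
    rw [hqsum k]
    rw [Finset.sum_const, Finset.card_range, ← Nat.cast_smul_eq_nsmul ℝ k ρ]
    abel
  have : ‖qk k - (q + (k:ℝ) • ρ)‖ ≤ (k:ℝ) * (2 * (Lg * (|ε| * n * M))) := by
    rw [hdev]
    refine le_trans (norm_sum_le _ _) ?_
    calc ∑ j ∈ Finset.range k, ‖g (pk (j+1)) - ρ‖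
        ≤ ∑ j ∈ Finset.range k, 2 * (Lg * (|ε| * n * M)) := by
          refine Finset.sum_le_sum fun j hj => ?_
          exact hgpj j (Nat.succ_le_of_lt (lt_of_lt_of_le (Finset.mem_range.mp hj) hk.le))
      _ = (k:ℝ) * (2 * (Lg * (|ε| * n * M))) := by
          rw [Finset.sum_const, Finset.card_range, nsmul_eq_mul]
  refine le_trans this ?_
  have hkn : (k:ℝ) ≤ (n:ℝ) := Nat.cast_le.mpr hk.le
  calc (k:ℝ) * (2 * (Lg * (|ε| * n * M))) ≤ (n:ℝ) * (2 * (Lg * (|ε| * n * M))) := by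
        refine mul_le_mul_of_nonneg_right hkn ?_
        positivity
    _ = 2 * Lg * (n:ℝ)^2 * M * |ε| := by ring

end Aux6
section Aux7
variable {d : ℕ}

lemma pairing_sum_left (nn : ℕ) (f : ℕ → Ed d) (v : Ed d) :
    ∑ k ∈ Finset.range nn, pairing (f k) v = pairing (∑ k ∈ Finset.range nn, f k) v := by
  induction nn with
  | zero => simp [pairing]
  | succ j ih => rw [Finset.sum_range_succ, Finset.sum_range_succ, ih, ← pairing_add_left]

lemma limit_sum_zero
    {G : Ed d → ℝ} (hG : ContDiff ℝ 2 G) {g : Ed d → Ed d}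
    {Fε : ℝ → Ed d × Ed d → Ed d × Ed d}
    (hform : ∀ (ε : ℝ) (q p : Ed d),
      Fε ε (q, p) = (q + g (p + ε • gradf G q), p + ε • gradf G q))
    {m : Fin d → ℤ} {n : ℕ} (hn : 0 < n)
    (hacc : ∀ δ : ℝ, 0 < δ → ∃ ε : ℝ, ε ≠ 0 ∧ |ε| < δ ∧
      ∃ γ : Ed d → Ed d, IsPeriodicGraph (Fε ε) m n γ)
    {M : ℝ} (hM : ∀ q, ‖gradf G q‖ ≤ M)
    {Lg : ℝ} (hLg0 : 0 ≤ Lg) (hLip : ∀ a b : Ed d, ‖g a - g b‖ ≤ Lg * ‖a - b‖)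
    (q : Ed d) :
    ∑ k ∈ Finset.range n, gradf G (q + (k:ℝ) • ((n:ℝ)⁻¹ • intVec d m)) = 0 := by
  have hM0 : 0 ≤ M := le_trans (norm_nonneg _) (hM 0)
  set ρ : Ed d := (n:ℝ)⁻¹ • intVec d m with hρ
  set S₀ : Ed d := ∑ k ∈ Finset.range n, gradf G (q + (k:ℝ) • ρ) with hS₀
  have hbound : ∀ η : ℝ, 0 < η → ‖S₀‖ ≤ η := by
    intro η hη
    have hηn : 0 < η / n := by positivity
    have hcont : ∀ k : ℕ, ∃ δ : ℝ, 0 < δ ∧ ∀ y : Ed d,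
        ‖y - (q + (k:ℝ) • ρ)‖ < δ → ‖gradf G y - gradf G (q + (k:ℝ) • ρ)‖ < η / n := by
      intro k
      have hc := (continuous_gradf hG).continuousAt (x := q + (k:ℝ) • ρ)
      rw [Metric.continuousAt_iff] at hc
      obtain ⟨δ, hδ0, hδ⟩ := hc (η / n) hηn
      refine ⟨δ, hδ0, fun y hy => ?_⟩
      have h2 := hδ (show dist y (q + (k:ℝ) • ρ) < δ by rwa [dist_eq_norm])
      rwa [dist_eq_norm] at h2
    choose δf hδf0 hδf using hcont
    have hne : (Finset.range n).Nonempty := ⟨0, Finset.mem_range.mpr hn⟩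
    set δ : ℝ := (Finset.range n).inf' hne δf with hδdef
    have hδ0 : 0 < δ := by
      rw [hδdef, Finset.lt_inf'_iff]
      exact fun k _ => hδf0 k
    set B : ℝ := 2 * Lg * (n:ℝ)^2 * M with hB
    have hB0 : 0 ≤ B := by positivity
    obtain ⟨ε, hε0, hεlt, γ, hγ⟩ := hacc (δ / (B + 1)) (by positivity)
    obtain ⟨hsumzero, hdev⟩ := orbit_analysis hε0 (hform ε) hn hγ hM hLg0 hLip q
    have hdevlt : ∀ k, k < n → ‖((Fε ε)^[k] (q, γ q)).1 - (q + (k:ℝ) • ρ)‖ < δ := by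
      intro k hk
      refine lt_of_le_of_lt (hdev k hk) ?_
      calc B * |ε| ≤ (B + 1) * |ε| := by
            refine mul_le_mul_of_nonneg_right ?_ (abs_nonneg ε)
            linarith
        _ < (B + 1) * (δ / (B + 1)) := by
            refine mul_lt_mul_of_pos_left hεlt ?_
            linarith
        _ = δ := by field_simp
    have hterm : ∀ k, k < n →
        ‖gradf G (q + (k:ℝ) • ρ) - gradf G (((Fε ε)^[k] (q, γ q)).1)‖ ≤ η / n := by
      intro k hk
      rw [norm_sub_rev]
      refine le_of_lt (hδf k _ ?_)
      refine lt_of_lt_of_le (hdevlt k hk) ?_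
      rw [hδdef]
      exact Finset.inf'_le δf (Finset.mem_range.mpr hk)
    have hS₀eq : S₀ = ∑ k ∈ Finset.range n,
        (gradf G (q + (k:ℝ) • ρ) - gradf G (((Fε ε)^[k] (q, γ q)).1)) := by
      rw [hS₀, Finset.sum_sub_distrib, hsumzero, sub_zero]
    rw [hS₀eq]
    refine le_trans (norm_sum_le _ _) ?_
    calc ∑ k ∈ Finset.range n,
        ‖gradf G (q + (k:ℝ) • ρ) - gradf G (((Fε ε)^[k] (q, γ q)).1)‖
        ≤ ∑ _k ∈ Finset.range n, η / n := by
          refine Finset.sum_le_sum fun k hk => hterm k (Finset.mem_range.mp hk)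
      _ = (n:ℝ) * (η / n) := by rw [Finset.sum_const, Finset.card_range, nsmul_eq_mul]
      _ = η := by field_simp
  have : ‖S₀‖ ≤ 0 := by
    by_contra hlt
    push_neg at hlt
    have := hbound (‖S₀‖ / 2) (by linarith)
    linarith
  have := le_antisymm this (norm_nonneg _)
  rwa [norm_eq_zero] at this

lemma sum_G_const {G : Ed d → ℝ} (hG : ContDiff ℝ 2 G) (ρ : Ed d) (n : ℕ)
    (hzero : ∀ q : Ed d, ∑ k ∈ Finset.range n, gradf G (q + (k:ℝ) • ρ) = 0) :
    ∀ q : Ed d, ∑ k ∈ Finset.range n, G (q + (k:ℝ) • ρ)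
      = ∑ k ∈ Finset.range n, G ((0:Ed d) + (k:ℝ) • ρ) := by
  have hGd : Differentiable ℝ G := hG.differentiable two_ne_zero
  set H : Ed d → ℝ := fun q => ∑ k ∈ Finset.range n, G (q + (k:ℝ) • ρ) with hH
  have hterm : ∀ (k : ℕ) (x : Ed d), HasFDerivAt (fun y : Ed d => G (y + (k:ℝ) • ρ))
      (fderiv ℝ G (x + (k:ℝ) • ρ)) x := by
    intro k x
    have h1 : HasFDerivAt (fun y : Ed d => y + (k:ℝ) • ρ)
        (ContinuousLinearMap.id ℝ (Ed d)) x := (hasFDerivAt_id x).add_const _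
    have h2 := (hGd (x + (k:ℝ) • ρ)).hasFDerivAt
    exact h2.comp x h1
  have hHdiff : Differentiable ℝ H := by
    intro x
    exact DifferentiableAt.fun_sum fun k _ => (hterm k x).differentiableAt
  have hHfd : ∀ x : Ed d, fderiv ℝ H x = 0 := by
    intro x
    have h1 : HasFDerivAt H (∑ k ∈ Finset.range n, fderiv ℝ G (x + (k:ℝ) • ρ)) x :=
      HasFDerivAt.fun_sum fun k _ => hterm k x
    rw [h1.fderiv]
    ext v
    rw [ContinuousLinearMap.sum_apply, ContinuousLinearMap.zero_apply]
    have h2 : ∀ k ∈ Finset.range n, fderiv ℝ G (x + (k:ℝ) • ρ) v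
        = pairing (gradf G (x + (k:ℝ) • ρ)) v := fun k _ =>
      (pairing_gradf (hGd _) v).symm
    rw [Finset.sum_congr rfl h2]
    rw [pairing_sum_left]
    rw [hzero x]
    simp [pairing]
  intro q
  exact is_const_of_fderiv_eq_zero hHdiff hHfd q 0

end Aux7
section Aux8
variable {d : ℕ}

lemma exists_int_in_Ioo {u v : ℝ} (h : 1 < v - u) : ∃ k : ℤ, u < (k:ℝ) ∧ (k:ℝ) < v := by
  refine ⟨⌊u⌋ + 1, ?_, ?_⟩
  · push_cast
    exact Int.lt_floor_add_one u
  · push_cast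
    have := Int.floor_le u
    linarith

lemma exists_common_denom (w : Fin d → ℚ) :
    ∃ N : ℕ, 0 < N ∧ ∃ m₀ : Fin d → ℤ, ∀ i, (m₀ i : ℚ) = (N : ℚ) * w i := by
  classical
  set N : ℕ := ∏ i, (w i).den with hN
  have hNpos : 0 < N := Finset.prod_pos fun i _ => (w i).pos
  refine ⟨N, hNpos, fun i => (w i).num * ((N / (w i).den : ℕ) : ℤ), fun i => ?_⟩
  have hdvd : (w i).den ∣ N := Finset.dvd_prod_of_mem _ (Finset.mem_univ i)
  have hden0 : ((w i).den : ℚ) ≠ 0 := Nat.cast_ne_zero.mpr (w i).den_nz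
  have hnum' : ((w i).num : ℚ) = w i * (w i).den := by
    have h := Rat.num_div_den (w i)
    exact (div_eq_iff hden0).mp h
  have hcast : (((N / (w i).den : ℕ)) : ℚ) = (N : ℚ) / ((w i).den : ℚ) :=
    Nat.cast_div hdvd hden0
  have hLHS : (((w i).num * ((N / (w i).den : ℕ) : ℤ) : ℤ) : ℚ)
      = ((w i).num : ℚ) * (((N / (w i).den : ℕ) : ℕ) : ℚ) := by
    rw [Int.cast_mul, Int.cast_natCast]
  rw [hLHS, hcast, hnum']
  have hfin : w i * ((w i).den : ℚ) * ((N:ℚ) / ((w i).den : ℚ))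
      = w i * (N:ℚ) * (((w i).den : ℚ) / ((w i).den : ℚ)) := by ring
  rw [hfin, div_self hden0, mul_one]
  ring

/-- Any rational vector has a representation `m / n` with `m` and `n` coprime. -/
lemma exists_reduced_fraction (w : Fin d → ℚ)
    (hex : ∃ N : ℕ, 0 < N ∧ ∃ m₀ : Fin d → ℤ, ∀ i, (m₀ i : ℚ) = (N : ℚ) * w i) :
    ∃ (m : Fin d → ℤ) (n : ℕ), 0 < n ∧ CoprimeVec m n ∧ ∀ i, (m i : ℚ) = (n : ℚ) * w i := by
  classical
  obtain ⟨N, hNpos, hexm⟩ := hex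
  induction N using Nat.strong_induction_on with
  | _ N ih =>
    obtain ⟨m, hm⟩ := hexm
    by_cases hc : CoprimeVec m N
    · exact ⟨m, N, hNpos, hc, hm⟩
    · set gA := Finset.univ.gcd fun i => (m i).natAbs with hgA
      set g := Nat.gcd gA N with hg
      have hgpos : 0 < g := Nat.gcd_pos_of_pos_right gA hNpos
      have hg1 : g ≠ 1 := fun h => hc h
      have hg2 : 2 ≤ g := by omega
      have hgn : g ∣ N := Nat.gcd_dvd_right gA N
      have hgm : ∀ i, (g : ℤ) ∣ m i := by
        intro i
        have h1 : gA ∣ (m i).natAbs := Finset.gcd_dvd (Finset.mem_univ i)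
        have h2 : g ∣ (m i).natAbs := dvd_trans (Nat.gcd_dvd_left gA N) h1
        exact Int.dvd_natAbs.mp (Int.natCast_dvd_natCast.mpr h2)
      have hn'pos : 0 < N / g := Nat.div_pos (Nat.le_of_dvd hNpos hgn) hgpos
      have hn'lt : N / g < N := Nat.div_lt_self hNpos hg2
      have hgq : (g : ℚ) ≠ 0 := Nat.cast_ne_zero.mpr hgpos.ne'
      refine ih (N / g) hn'lt hn'pos ⟨fun i => m i / g, fun i => ?_⟩
      have h1 : (g : ℤ) * (m i / g) = m i := Int.mul_ediv_cancel' (hgm i)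
      have h2 : g * (N / g) = N := Nat.mul_div_cancel' hgn
      have h3 : (g : ℚ) * ((m i / g : ℤ) : ℚ) = (m i : ℚ) := by
        exact_mod_cast congrArg (fun z : ℤ => (z : ℚ)) h1
      have h4 : (m i : ℚ) = (g : ℚ) * ((N / g : ℕ) : ℚ) * w i := by
        rw [hm i]
        have : ((N : ℕ) : ℚ) = (g : ℚ) * ((N / g : ℕ) : ℚ) := by
          exact_mod_cast congrArg (fun z : ℕ => (z : ℚ)) h2.symm
        rw [this]
      have h5 : (g : ℚ) * ((m i / g : ℤ) : ℚ) = (g : ℚ) * (((N / g : ℕ) : ℚ) * w i) := by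
        rw [h3, h4]; ring
      exact mul_left_cancel₀ hgq h5

end Aux8
section Aux9
variable {d : ℕ}

/-- The coercion `ℚ^d → ℝ^d` as a `ℚ`-linear map. -/
noncomputable def castLQ (d : ℕ) : (Fin d → ℚ) →ₗ[ℚ] (Fin d → ℝ) where
  toFun x := fun i => (x i : ℝ)
  map_add' x y := by funext i; simp only [Pi.add_apply]; push_cast; rfl
  map_smul' c x := by
    funext i
    simp only [Pi.smul_apply, RingHom.id_apply]
    rw [Rat.smul_def, Rat.smul_def]
    push_cast
    rfl

lemma finite_bounded_pairings (qv : Fin d → Fin d → ℚ) (hqv : LinearIndependent ℚ qv)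
    (K : Fin d → ℝ) :
    {ν : Fin d → ℤ | ∀ j, |∑ i, (ν i : ℝ) * (qv j i : ℝ)| ≤ K j}.Finite := by
  classical
  rcases Nat.eq_zero_or_pos d with hd | hd
  · subst hd
    refine Set.Subsingleton.finite ?_
    intro a _ b _
    funext i
    exact i.elim0
  haveI : Nonempty (Fin d) := ⟨⟨0, hd⟩⟩
  set qvR : Fin d → (Fin d → ℝ) := fun j i => (qv j i : ℝ) with hqvR
  -- the real vectors span everything
  have hcard : Fintype.card (Fin d) = Module.finrank ℚ (Fin d → ℚ) := by
    simp [Module.finrank_fintype_fun_eq_card]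
  set bQ : Module.Basis (Fin d) ℚ (Fin d → ℚ) := basisOfLinearIndependentOfCardEqFinrank hqv hcard
    with hbQdef
  have hbQ : ⇑bQ = qv := coe_basisOfLinearIndependentOfCardEqFinrank hqv hcard
  have hmemQ : ∀ y : Fin d → ℚ, castLQ d y ∈ Submodule.span ℝ (Set.range qvR) := by
    intro y
    have hy : (∑ j, bQ.repr y j • bQ j) = y := bQ.sum_repr y
    have h1 : castLQ d y = ∑ j, ((bQ.repr y j : ℚ) : ℝ) • qvR j := by
      conv_lhs => rw [← hy]
      rw [map_sum]
      refine Finset.sum_congr rfl fun j _ => ?_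
      rw [LinearMap.map_smul]
      rw [hbQ]
      funext i
      simp [castLQ, Rat.smul_def]
      exact Or.inl rfl
    rw [h1]
    refine Submodule.sum_mem _ fun j _ => ?_
    exact Submodule.smul_mem _ _ (Submodule.subset_span ⟨j, rfl⟩)
  have hspan : Submodule.span ℝ (Set.range qvR) = ⊤ := by
    rw [eq_top_iff]
    intro x _
    have hx : x = ∑ i, x i • fun j => if i = j then (1:ℝ) else 0 := pi_eq_sum_univ x
    rw [hx]
    refine Submodule.sum_mem _ fun i _ => ?_
    refine Submodule.smul_mem _ _ ?_
    have : (fun j => if i = j then (1:ℝ) else 0)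
        = castLQ d (fun j => if i = j then (1:ℚ) else 0) := by
      funext j
      simp only [castLQ, LinearMap.coe_mk, AddHom.coe_mk]
      split <;> simp
    rw [this]
    exact hmemQ _
  -- the pairing map
  set T : (Fin d → ℝ) →ₗ[ℝ] (Fin d → ℝ) :=
    { toFun := fun x => fun j => ∑ i, x i * qvR j i
      map_add' := by
        intro x y
        funext j
        simp only [Pi.add_apply]
        rw [← Finset.sum_add_distrib]
        exact Finset.sum_congr rfl fun i _ => by ring
      map_smul' := by
        intro c x
        funext j
        simp only [Pi.smul_apply, RingHom.id_apply, smul_eq_mul]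
        rw [Finset.mul_sum]
        exact Finset.sum_congr rfl fun i _ => by ring } with hT
  have hTinj : Function.Injective T := by
    rw [← LinearMap.ker_eq_bot, eq_bot_iff]
    intro x hx
    simp only [LinearMap.mem_ker] at hx
    set s : Submodule ℝ (Fin d → ℝ) :=
      { carrier := {y | ∑ i, x i * y i = 0}
        add_mem' := by
          intro a b ha hb
          simp only [Set.mem_setOf_eq, Pi.add_apply] at *
          rw [show (∑ i, x i * (a i + b i)) = (∑ i, x i * a i) + ∑ i, x i * b i by
            rw [← Finset.sum_add_distrib]; exact Finset.sum_congr rfl fun i _ => by ring]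
          rw [ha, hb, add_zero]
        zero_mem' := by simp
        smul_mem' := by
          intro c y hy
          simp only [Set.mem_setOf_eq, Pi.smul_apply, smul_eq_mul] at *
          rw [show (∑ i, x i * (c * y i)) = c * ∑ i, x i * y i by
            rw [Finset.mul_sum]; exact Finset.sum_congr rfl fun i _ => by ring]
          rw [hy, mul_zero] } with hs
    have hsub : Set.range qvR ⊆ (s : Set (Fin d → ℝ)) := by
      rintro y ⟨j, rfl⟩
      have := congrFun hx j
      exact this
    have hle : Submodule.span ℝ (Set.range qvR) ≤ s := Submodule.span_le.mpr hsub
    rw [hspan] at hle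
    have hxs : x ∈ s := hle trivial
    have hx0 : ∑ i, x i * x i = 0 := hxs
    have hall : ∀ i ∈ Finset.univ, x i * x i = 0 := by
      rw [← Finset.sum_eq_zero_iff_of_nonneg fun i _ => mul_self_nonneg (x i)]
      exact hx0
    have : x = 0 := funext fun i => mul_self_eq_zero.mp (hall i (Finset.mem_univ i))
    simp [this]
  have hTsurj : Function.Surjective T :=
    (LinearMap.injective_iff_surjective).mp hTinj
  set E : (Fin d → ℝ) ≃ₗ[ℝ] (Fin d → ℝ) := LinearEquiv.ofBijective T ⟨hTinj, hTsurj⟩ with hE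
  set Einv : (Fin d → ℝ) →L[ℝ] (Fin d → ℝ) :=
    LinearMap.toContinuousLinearMap (E.symm.toLinearMap) with hEinv
  set C := ‖Einv‖ with hC
  set K' := ∑ j, |K j| with hK'
  have hK'0 : 0 ≤ K' := Finset.sum_nonneg fun j _ => abs_nonneg _
  set R := C * K' with hR
  -- every element of the set is bounded
  have hbound : ∀ ν : Fin d → ℤ, (∀ j, |∑ i, (ν i : ℝ) * (qv j i : ℝ)| ≤ K j) →
      ∀ i, |ν i| ≤ ⌈R⌉ := by
    intro ν hν i
    set x : Fin d → ℝ := fun i => (ν i : ℝ) with hx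
    have hTx : ‖T x‖ ≤ K' := by
      rw [pi_norm_le_iff_of_nonneg hK'0]
      intro j
      have h1 : T x j = ∑ i, x i * qvR j i := rfl
      rw [Real.norm_eq_abs, h1]
      refine le_trans (hν j) ?_
      refine le_trans (le_abs_self (K j)) ?_
      exact Finset.single_le_sum (fun j _ => abs_nonneg (K j)) (Finset.mem_univ j)
    have hxE : Einv (T x) = x := by
      rw [hEinv]
      have h0 : (LinearMap.toContinuousLinearMap (E.symm.toLinearMap)) (T x)
          = E.symm (T x) := rfl
      rw [h0]
      have h1 : T x = E x := rfl
      rw [h1, E.symm_apply_apply]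
    have h2 : ‖x‖ ≤ C * K' := by
      rw [← hxE]
      refine le_trans (Einv.le_opNorm (T x)) ?_
      exact mul_le_mul_of_nonneg_left hTx (norm_nonneg _)
    have h3 : |x i| ≤ R := by
      rw [← Real.norm_eq_abs]
      exact le_trans (norm_le_pi_norm x i) h2
    have h4 : ((|ν i| : ℤ) : ℝ) ≤ ((⌈R⌉ : ℤ) : ℝ) := by
      rw [Int.cast_abs]
      exact le_trans h3 (Int.le_ceil R)
    exact_mod_cast h4
  refine Set.Finite.subset (Set.Finite.pi fun _ : Fin d => Set.finite_Icc (-(⌈R⌉)) ⌈R⌉) ?_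
  intro ν hν
  rw [Set.mem_pi]
  intro i _
  rcases abs_le.mp (hbound ν hν i) with ⟨h1, h2⟩
  exact Set.mem_Icc.mpr ⟨h1, h2⟩

end Aux9

/-- Proposition 3.3 of the paper. Under the hypotheses of Theorem 2
(complete integrability, strong positivity, analyticity property, and existence of
Lipschitz Lagrangian `(m,n)`-periodic graphs of `F_ε` for infinitely many `ε`
accumulating at `0`, for all rational rotation vectors `m/n` in `⋃_j I_j q_j` for a
basis `q₁, …, q_d` of `ℚ^d` and open intervals `I_j`), the function `G` is a
trigonometric polynomial: only finitely many Fourier coefficients `Ĝ(ν)` are nonzero. -/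
theorem statement11 (d : ℕ) (F : Ed d × Ed d → Ed d × Ed d) (S : Ed d × Ed d → ℝ)
    (G : Ed d → ℝ) (hGreg : ContDiff ℝ 2 G) (hGper : ZdPeriodicFun G)
    (Fε : ℝ → Ed d × Ed d → Ed d × Ed d)
    (hFS : IsSymplecticTwistLift F S)
    (hfam : ∀ ε : ℝ, IsSymplecticTwistLift (Fε ε) fun x => S x + ε * G x.1)
    (hcont : Continuous fun x : ℝ × (Ed d × Ed d) => Fε x.1 x.2)
    (hint : CompletelyIntegrableLift F)
    (hpos : StronglyPositiveGenFun S)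
    (hanal : SatisfiesAnalyticityProperty F)
    (qv : Fin d → Fin d → ℚ) (hqv : LinearIndependent ℚ qv)
    (a b : Fin d → ℝ) (hab : ∀ j, a j < b j)
    (hiv : ∀ (j : Fin d) (m : Fin d → ℤ) (n : ℕ), 0 < n → CoprimeVec m n →
      (∃ t ∈ Set.Ioo (a j) (b j), ∀ i, (m i : ℝ) = (n : ℝ) * (t * (qv j i : ℝ))) →
      InfiniteAccumulatingAtZero {ε : ℝ | HasLipLagPeriodicGraph (Fε ε) m n}) :
    {ν : Fin d → ℤ | fourierCoeffT G ν ≠ 0}.Finite := by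
  classical
  obtain ⟨ℓ, g, hℓ, hgrad, ⟨hgC1, ginv, hginvC1, hgl, hgr⟩, hFform⟩ := hint
  obtain ⟨hS2, α, β, hα, hβ, hmix⟩ := hpos
  have hFform' : ∀ q p : Ed d, F (q, p) = (q + g p, p) := hFform
  have hB1 := genfun_dq_eq hFS.genfun hFform' hgr
  have hB2 := genfun_dQ_eq hFS.genfun hFform' hgr
  have hform : ∀ (ε : ℝ) (q p : Ed d),
      Fε ε (q, p) = (q + g (p + ε • gradf G q), p + ε • gradf G q) :=
    fun ε q p => family_formula hS2 hGreg hgr hB1 hB2 ε (hfam ε).genfun q p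
  have hmono := ginv_strong_mono hginvC1 hB1 hα (fun q Q v => (hmix q Q v).2)
  have hLip := g_lip hgl hα hmono
  have hLg0 : (0:ℝ) ≤ α⁻¹ := by positivity
  obtain ⟨M, hM0, hM⟩ := gradf_bound hGreg hGper
  -- the key vanishing statement
  have hvanish : ∀ ν : Fin d → ℤ, ν ≠ 0 →
      (∃ j, 2 / (b j - a j) < |∑ i, (ν i : ℝ) * (qv j i : ℝ)|) →
      fourierCoeffT G ν = 0 := by
    intro ν hν ⟨j, hj⟩
    set cR : ℝ := ∑ i, (ν i : ℝ) * (qv j i : ℝ) with hcR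
    set c : ℚ := ∑ i, (ν i : ℚ) * qv j i with hc
    have hccast : (c : ℝ) = cR := by rw [hc, hcR]; push_cast; rfl
    have hba : 0 < b j - a j := by linarith [hab j]
    have hKpos : 0 < 2 / (b j - a j) := by positivity
    have hcR0 : cR ≠ 0 := by
      intro h
      rw [h] at hj
      simp at hj
      linarith
    have habs : 2 < |cR| * (b j - a j) := by
      rw [div_lt_iff₀ hba] at hj
      linarith
    -- find an integer k₀ with a j < k₀ / cR < b j
    have hk₀ : ∃ k₀ : ℤ, a j < (k₀ : ℝ) / cR ∧ (k₀ : ℝ) / cR < b j := by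
      rcases lt_or_gt_of_ne hcR0 with hneg | hpos
      · have hlen : 1 < cR * a j - cR * b j := by
          have : |cR| = -cR := abs_of_neg hneg
          rw [this] at habs
          nlinarith
        obtain ⟨k₀, h1, h2⟩ := exists_int_in_Ioo hlen
        refine ⟨k₀, ?_, ?_⟩
        · rw [lt_div_iff_of_neg hneg]
          nlinarith
        · rw [div_lt_iff_of_neg hneg]
          nlinarith
      · have hlen : 1 < cR * b j - cR * a j := by
          have : |cR| = cR := abs_of_pos hpos
          rw [this] at habs
          nlinarith
        obtain ⟨k₀, h1, h2⟩ := exists_int_in_Ioo hlen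
        refine ⟨k₀, ?_, ?_⟩
        · rw [lt_div_iff₀ hpos]
          nlinarith
        · rw [div_lt_iff₀ hpos]
          nlinarith
    obtain ⟨k₀, hk₀1, hk₀2⟩ := hk₀
    have hc0 : c ≠ 0 := by
      intro h
      rw [h] at hccast
      simp at hccast
      exact hcR0 hccast.symm
    set t : ℚ := (k₀ : ℚ) / c with ht
    have htcast : (t : ℝ) = (k₀ : ℝ) / cR := by
      rw [ht]
      push_cast
      rw [hccast]
    -- reduced fraction for t • qv j
    set w : Fin d → ℚ := fun i => t * qv j i with hw
    obtain ⟨m, n, hn, hcop, hm⟩ := exists_reduced_fraction w (exists_common_denom w)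
    have hn0 : ((n:ℝ)) ≠ 0 := Nat.cast_ne_zero.mpr hn.ne'
    have hmcast : ∀ i, (m i : ℝ) = (n : ℝ) * ((t:ℝ) * (qv j i : ℝ)) := by
      intro i
      have h3 := hm i
      rw [hw] at h3
      simp only at h3
      have h4 := congrArg (fun z : ℚ => (z : ℝ)) h3
      push_cast at h4
      exact h4
    -- apply the hypothesis
    have hacc := hiv j m n hn hcop ⟨(t:ℝ), ⟨by rw [htcast]; exact hk₀1, by rw [htcast]; exact hk₀2⟩, hmcast⟩
    have hacc' : ∀ δ : ℝ, 0 < δ → ∃ ε : ℝ, ε ≠ 0 ∧ |ε| < δ ∧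
        ∃ γ : Ed d → Ed d, IsPeriodicGraph (Fε ε) m n γ := by
      intro δ hδ
      obtain ⟨ε, hεA, hεne, hεlt⟩ := hacc.2 δ hδ
      obtain ⟨γ, _, _, _, hγ⟩ := hεA
      exact ⟨ε, hεne, hεlt, γ, hγ⟩
    set ρ : Ed d := (n:ℝ)⁻¹ • intVec d m with hρ
    have hzero : ∀ q : Ed d, ∑ k ∈ Finset.range n, gradf G (q + (k:ℝ) • ρ) = 0 :=
      fun q => limit_sum_zero hGreg hform hn hacc' hM hLg0 hLip q
    have hconst := sum_G_const hGreg ρ n hzero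
    have hk0 : ∑ i, (ν i : ℝ) * ρ i = (k₀ : ℝ) := by
      have hterm : ∀ i, (ν i : ℝ) * ρ i = (t:ℝ) * ((ν i : ℝ) * (qv j i : ℝ)) := by
        intro i
        have h1 : ρ i = (n:ℝ)⁻¹ * (m i : ℝ) := rfl
        rw [h1, hmcast i]
        field_simp
      rw [Finset.sum_congr rfl fun i _ => hterm i, ← Finset.mul_sum, ← hcR, htcast]
      field_simp
    exact fourier_vanish G (hGreg.continuous) hGper ν hν ρ n hn k₀ hk0 _ hconst
  -- conclude finiteness
  have hsubset : {ν : Fin d → ℤ | fourierCoeffT G ν ≠ 0}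
      ⊆ {0} ∪ {ν : Fin d → ℤ | ∀ j, |∑ i, (ν i : ℝ) * (qv j i : ℝ)| ≤ 2 / (b j - a j)} := by
    intro ν hν
    by_cases h0 : ν = 0
    · exact Or.inl h0
    · refine Or.inr fun j => ?_
      by_contra hgt
      push_neg at hgt
      exact hν (hvanish ν h0 ⟨j, hgt⟩)
  exact Set.Finite.subset ((Set.finite_singleton 0).union
    (finite_bounded_pairings qv hqv fun j => 2 / (b j - a j))) hsubset

end
end
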